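/- Existence of the Berlekamp–Welch pair: with n = q−1, s ≥ 1, 0 ≤ d < sn, and any y ∈ (F_q^s)^n indexed by α_1,...,α_n ∈ F_q^*, there exists a nonzero pair (N, E) of polynomials with deg N ≤ (sn+d)/2 and deg E ≤ (sn−d)/2 satisfying, for every i ∈ {1,...,n} and every 0 ≤ e < s, the linear equation H_e(N)(α_i) = Σ_{j=0}^{e} H_j(E)(α_i)·y_{i,e-j}. -/

import Mathlib

/-- existence of the Berlekamp–Welch pair: for `n = q−1`, `s ≥ 1`,
`0 ≤ d < sn`, and any `y ∈ (F_q^s)^n`, there is a nonzero pair `(N, E)` with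
`deg N ≤ (sn+d)/2` and `deg E ≤ (sn−d)/2` satisfying all the key equations. -/
theorem berlekamp_welch_exists {Fq : Type*} [Field Fq] [Fintype Fq] {s d n : ℕ}
    (hs : 1 ≤ s) (hn : n = Fintype.card Fq - 1) (hd : d < s * n)
    (α : Fin n → Fq) (hαinj : Function.Injective α) (hα0 : ∀ i, α i ≠ 0)
    (y : Fin n → Fin s → Fq) :
    ∃ N E : Polynomial Fq, ¬(N = 0 ∧ E = 0) ∧
      (N.natDegree : ℚ) ≤ ((s * n + d : ℕ) : ℚ) / 2 ∧
      (E.natDegree : ℚ) ≤ ((s * n : ℕ) - (d : ℚ)) / 2 ∧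
      ∀ (i : Fin n) (e : ℕ) (he : e < s),
        (Polynomial.hasseDeriv e N).eval (α i) =
          ∑ j : Fin (e + 1), (Polynomial.hasseDeriv j E).eval (α i) *
            y i ⟨e - j, lt_of_le_of_lt (Nat.sub_le e j) he⟩ := by
  classical
  set a := (s * n + d) / 2 + 1 with ha
  set b := (s * n - d) / 2 + 1 with hb
  let V := Polynomial.degreeLT Fq a × Polynomial.degreeLT Fq b
  let L : V →ₗ[Fq] (Fin n → Fin s → Fq) :=
  { toFun := fun p i e =>
      (Polynomial.hasseDeriv e.1 (p.1 : Polynomial Fq)).eval (α i) -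
        ∑ j : Fin (e.1 + 1), (Polynomial.hasseDeriv j (p.2 : Polynomial Fq)).eval (α i) *
          y i ⟨e.1 - j, lt_of_le_of_lt (Nat.sub_le e.1 j) e.2⟩
    map_add' := by
      rintro ⟨⟨N, hN⟩, E, hE⟩ ⟨⟨N', hN'⟩, E', hE'⟩
      funext i e
      show (Polynomial.hasseDeriv e.1 (N + N')).eval (α i) -
          ∑ j : Fin (e.1 + 1), (Polynomial.hasseDeriv j.1 (E + E')).eval (α i) *
            y i ⟨e.1 - j.1, lt_of_le_of_lt (Nat.sub_le e.1 j.1) e.2⟩ =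
        ((Polynomial.hasseDeriv e.1 N).eval (α i) -
          ∑ j : Fin (e.1 + 1), (Polynomial.hasseDeriv j.1 E).eval (α i) *
            y i ⟨e.1 - j.1, lt_of_le_of_lt (Nat.sub_le e.1 j.1) e.2⟩) +
        ((Polynomial.hasseDeriv e.1 N').eval (α i) -
          ∑ j : Fin (e.1 + 1), (Polynomial.hasseDeriv j.1 E').eval (α i) *
            y i ⟨e.1 - j.1, lt_of_le_of_lt (Nat.sub_le e.1 j.1) e.2⟩)
      simp only [map_add, Polynomial.eval_add, add_mul, Finset.sum_add_distrib]
      ring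
    map_smul' := by
      rintro c ⟨⟨N, hN⟩, E, hE⟩
      funext i e
      show (Polynomial.hasseDeriv e.1 (c • N)).eval (α i) -
          ∑ j : Fin (e.1 + 1), (Polynomial.hasseDeriv j.1 (c • E)).eval (α i) *
            y i ⟨e.1 - j.1, lt_of_le_of_lt (Nat.sub_le e.1 j.1) e.2⟩ =
        c • ((Polynomial.hasseDeriv e.1 N).eval (α i) -
          ∑ j : Fin (e.1 + 1), (Polynomial.hasseDeriv j.1 E).eval (α i) *
            y i ⟨e.1 - j.1, lt_of_le_of_lt (Nat.sub_le e.1 j.1) e.2⟩)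
      simp only [map_smul, Polynomial.eval_smul, smul_eq_mul, Finset.mul_sum,
        mul_sub, mul_assoc] }
  haveI : FiniteDimensional Fq (Polynomial.degreeLT Fq a) :=
    (Polynomial.degreeLTEquiv Fq a).symm.finiteDimensional
  haveI : FiniteDimensional Fq (Polynomial.degreeLT Fq b) :=
    (Polynomial.degreeLTEquiv Fq b).symm.finiteDimensional
  have hfa : Module.finrank Fq (Polynomial.degreeLT Fq a) = a := by
    rw [(Polynomial.degreeLTEquiv Fq a).finrank_eq, Module.finrank_fin_fun]
  have hfb : Module.finrank Fq (Polynomial.degreeLT Fq b) = b := by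
    rw [(Polynomial.degreeLTEquiv Fq b).finrank_eq, Module.finrank_fin_fun]
  have hV : Module.finrank Fq V = a + b := by
    rw [Module.finrank_prod, hfa, hfb]
  have hW : Module.finrank Fq (Fin n → Fin s → Fq) = n * s := by
    rw [Module.finrank_pi_fintype]
    simp [Module.finrank_pi, Finset.sum_const, Fintype.card_fin, smul_eq_mul]
  have hdim : Module.finrank Fq (Fin n → Fin s → Fq) < Module.finrank Fq V := by
    rw [hV, hW]; have h := Nat.mul_comm n s; omega
  have hker : LinearMap.ker L ≠ ⊥ := by
    intro h
    have hinj : Function.Injective L := LinearMap.ker_eq_bot.mp h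
    exact absurd (LinearMap.finrank_le_finrank_of_injective hinj) (not_le.mpr hdim)
  obtain ⟨v, hv, hv0⟩ := Submodule.exists_mem_ne_zero_of_ne_bot hker
  refine ⟨v.1, v.2, ?_, ?_, ?_, ?_⟩
  · rintro ⟨h1, h2⟩
    apply hv0
    have : (v.1 : Polynomial Fq) = 0 ∧ (v.2 : Polynomial Fq) = 0 := ⟨h1, h2⟩
    ext <;> simp [Prod.ext_iff, this.1, this.2]
  · have hdeg : (v.1 : Polynomial Fq).natDegree < a := by
      rcases eq_or_ne (v.1 : Polynomial Fq) 0 with h | h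
      · rw [h]; simp [Polynomial.natDegree_zero, ha]
      · rw [Polynomial.natDegree_lt_iff_degree_lt h]
        exact_mod_cast Polynomial.mem_degreeLT.mp v.1.2
    have h1 : (v.1 : Polynomial Fq).natDegree ≤ (s * n + d) / 2 := by omega
    calc ((v.1 : Polynomial Fq).natDegree : ℚ) ≤ (((s * n + d) / 2 : ℕ) : ℚ) := by
          exact_mod_cast h1
      _ ≤ ((s * n + d : ℕ) : ℚ) / 2 := by exact_mod_cast Nat.cast_div_le
  · have hdeg : (v.2 : Polynomial Fq).natDegree < b := by
      rcases eq_or_ne (v.2 : Polynomial Fq) 0 with h | h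
      · rw [h]; simp [Polynomial.natDegree_zero, hb]
      · rw [Polynomial.natDegree_lt_iff_degree_lt h]
        exact_mod_cast Polynomial.mem_degreeLT.mp v.2.2
    have h1 : (v.2 : Polynomial Fq).natDegree ≤ (s * n - d) / 2 := by omega
    have h2 : (((s * n - d : ℕ) : ℚ)) = (s * n : ℕ) - (d : ℚ) := by
      have : d ≤ s * n := hd.le
      push_cast [Nat.cast_sub this]
      ring
    calc ((v.2 : Polynomial Fq).natDegree : ℚ) ≤ (((s * n - d) / 2 : ℕ) : ℚ) := by
          exact_mod_cast h1
      _ ≤ ((s * n - d : ℕ) : ℚ) / 2 := by exact_mod_cast Nat.cast_div_le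
      _ = ((s * n : ℕ) - (d : ℚ)) / 2 := by rw [h2]
  · intro i e he
    have hLv : L v = 0 := hv
    have := congrFun (congrFun hLv i) ⟨e, he⟩
    simp only [Pi.zero_apply] at this
    have h0 : (Polynomial.hasseDeriv e (v.1 : Polynomial Fq)).eval (α i) -
        ∑ j : Fin (e + 1), (Polynomial.hasseDeriv j (v.2 : Polynomial Fq)).eval (α i) *
          y i ⟨e - j, lt_of_le_of_lt (Nat.sub_le e j) he⟩ = 0 := this
    exact sub_eq_zero.mp h0
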